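/- Let P be a periodic orthogonal projection on ℋ = ℓ²(ℤ^d, ℂ^N), let U be a periodic unitary operator on ℋ, and fix i, j ∈ {1,…,d}. Assume that [P, X_i] and [P, X_j] admit bounded periodic extensions B_i and B_j, and that [U, X_i] and [U, X_j] admit bounded periodic extensions. Set P_U := U P U*. Then [P_U, X_i] and [P_U, X_j] admit bounded periodic extensions B'_i and B'_j, and the traces per unit volume agree: τ( P_U (B'_i B'_j − B'_j B'_i) P_U ) = τ( P (B_i B_j − B_j B_i) P ). -/

import Mathlib

noncomputable section

/-- The lattice `ℤ^d`. -/
abbrev ZLat (d : ℕ) := Fin d → ℤ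

/-- The Hilbert space `ℓ²(ℤ^d, ℂ^N)`. -/
abbrev Hilb (d N : ℕ) := lp (fun _ : ZLat d × Fin N => ℂ) 2

/-- The standard basis vector `δ_x e_s`. -/
def delta {d N : ℕ} (x : ZLat d) (s : Fin N) : Hilb d N := lp.single 2 (x, s) 1

/-- `ψ ∈ ℓ²(ℤ^d, ℂ^N)` is finitely supported. -/
def FinSupp {d N : ℕ} (ψ : Hilb d N) : Prop := (Function.support fun p => ψ p).Finite

open scoped Classical in
/-- The position operator `X_j`, defined (with junk value `0` if the result fails to be
square-summable, which never happens for finitely supported `ψ`) by `(X_j ψ)(x) = x_j ψ(x)`. -/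
def posOp {d N : ℕ} (j : Fin d) (ψ : Hilb d N) : Hilb d N :=
  if h : Memℓp (fun p : ZLat d × Fin N => (p.1 j : ℂ) * ψ p) 2 then ⟨_, h⟩ else 0

/-- A bounded operator `A` on `ℓ²(ℤ^d, ℂ^N)` is periodic, i.e. commutes with all lattice
translations `T_γ`; equivalently, its matrix elements are invariant under simultaneous
translation of both indices. -/
def IsPeriodic {d N : ℕ} (A : Hilb d N →L[ℂ] Hilb d N) : Prop :=
  ∀ (γ x y : ZLat d) (s t : Fin N),
    (inner ℂ (delta (x + γ) s) (A (delta (y + γ) t)) : ℂ) = inner ℂ (delta x s) (A (delta y t))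

/-- `K` is a bounded extension of the commutator `[A, X_j]`. -/
def IsCommExt {d N : ℕ} (A K : Hilb d N →L[ℂ] Hilb d N) (j : Fin d) : Prop :=
  ∀ φ ψ : Hilb d N, FinSupp φ → FinSupp ψ →
    (inner ℂ φ (K ψ) : ℂ) = inner ℂ φ (A (posOp j ψ)) - inner ℂ (posOp j φ) (A ψ)

/-- The trace per unit volume of a bounded periodic operator:
`τ(A) = ∑_{s=1}^N ⟨δ_0 e_s, A δ_0 e_s⟩`. -/
def tau {d N : ℕ} (A : Hilb d N →L[ℂ] Hilb d N) : ℂ :=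
  ∑ s : Fin N, inner ℂ (delta (0 : ZLat d) s) (A (delta 0 s))

/-- `H` has finite range `R`: matrix elements between sites at distance `> R` vanish. -/
def HasFiniteRange {d N : ℕ} (H : Hilb d N →L[ℂ] Hilb d N) (R : ℝ) : Prop :=
  ∀ (x y : ZLat d) (s t : Fin N), R < ‖x - y‖ →
    (inner ℂ (delta x s) (H (delta y t)) : ℂ) = 0


variable {d N : ℕ}

/-- pair version of delta -/
def dl (p : ZLat d × Fin N) : Hilb d N := delta p.1 p.2

lemma dl_def (x : ZLat d) (s : Fin N) : delta x s = dl (x, s) := rfl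

/-- matrix element -/
def mel (A : Hilb d N →L[ℂ] Hilb d N) (p q : ZLat d × Fin N) : ℂ := inner ℂ (dl p) (A (dl q))

lemma dl_apply (p q : ZLat d × Fin N) : (dl p : Hilb d N) q = if q = p then 1 else 0 := by
  classical
  rw [dl, delta, lp.single_apply]
  have hpe : ((p.1, p.2) : ZLat d × Fin N) = p := rfl
  rw [hpe]
  split_ifs with h
  · subst h; simp
  · simp [h]

lemma inner_dl_left (p : ZLat d × Fin N) (f : Hilb d N) : (inner ℂ (dl p) f : ℂ) = f p := by
  classical
  rw [dl, delta, lp.inner_single_left]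
  simp

lemma mel_apply (A : Hilb d N →L[ℂ] Hilb d N) (p q : ZLat d × Fin N) :
    mel A p q = (A (dl q) : Hilb d N) p := inner_dl_left _ _

lemma memℓp_of_finite {f : (ZLat d × Fin N) → ℂ} (h : (Function.support f).Finite) :
    Memℓp f 2 := by
  apply memℓp_gen
  apply summable_of_ne_finset_zero (s := h.toFinset)
  intro p hp
  have : f p = 0 := by
    by_contra hne
    exact hp (h.mem_toFinset.mpr hne)
  simp [this]

lemma finSupp_dl (p : ZLat d × Fin N) : FinSupp (dl p : Hilb d N) := by
  apply Set.Finite.subset (Set.finite_singleton p)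
  intro q hq
  simp only [Function.mem_support, dl_apply] at hq
  by_contra h
  rw [if_neg (by simpa using h)] at hq
  exact hq rfl

/-- coordinates of posOp for finitely supported ψ -/
lemma posOp_coe {j : Fin d} {ψ : Hilb d N} (h : FinSupp ψ) (q : ZLat d × Fin N) :
    (posOp j ψ : Hilb d N) q = (q.1 j : ℂ) * ψ q := by
  classical
  have hm : Memℓp (fun p : ZLat d × Fin N => (p.1 j : ℂ) * ψ p) 2 := by
    apply memℓp_of_finite
    apply h.subset
    intro p hp
    simp only [Function.mem_support] at hp ⊢
    intro h0; exact hp (by simp [h0])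
  rw [posOp, dif_pos hm]

lemma posOp_dl (j : Fin d) (p : ZLat d × Fin N) :
    posOp j (dl p : Hilb d N) = (p.1 j : ℂ) • dl p := by
  apply lp.ext
  funext q
  rw [posOp_coe (finSupp_dl p) q]
  have : ((p.1 j : ℂ) • dl p : Hilb d N) q = (p.1 j : ℂ) * (dl p : Hilb d N) q := rfl
  rw [this, dl_apply]
  split_ifs with h
  · subst h; simp
  · simp

lemma finSupp_sum_eq {ψ : Hilb d N} (h : FinSupp ψ) :
    ψ = ∑ p ∈ h.toFinset, ψ p • (dl p : Hilb d N) := by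
  apply lp.ext
  funext q
  rw [lp.coeFn_sum, Finset.sum_apply]
  have hco : ∀ p ∈ h.toFinset, (ψ p • (dl p : Hilb d N)) q = ψ p * (dl p : Hilb d N) q :=
    fun p _ => rfl
  rw [Finset.sum_congr rfl hco]
  simp only [dl_apply, mul_ite, mul_one, mul_zero]
  rw [Finset.sum_ite_eq h.toFinset q (fun p => ψ p)]
  split_ifs with hq
  · rfl
  · symm
    by_contra hne
    apply hq
    rw [h.mem_toFinset, Function.mem_support]
    exact fun h0 => hne h0.symm

lemma posOp_finSupp_sum {j : Fin d} {ψ : Hilb d N} (h : FinSupp ψ) :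
    posOp j ψ = ∑ p ∈ h.toFinset, ((p.1 j : ℂ) * ψ p) • (dl p : Hilb d N) := by
  apply lp.ext
  funext q
  rw [posOp_coe h q, lp.coeFn_sum, Finset.sum_apply]
  have hco : ∀ p ∈ h.toFinset,
      (((p.1 j : ℂ) * ψ p) • (dl p : Hilb d N)) q = ((p.1 j : ℂ) * ψ p) * (dl p : Hilb d N) q :=
    fun p _ => rfl
  rw [Finset.sum_congr rfl hco]
  simp only [dl_apply, mul_ite, mul_one, mul_zero]
  rw [Finset.sum_ite_eq h.toFinset q (fun p => (p.1 j : ℂ) * ψ p)]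
  split_ifs with hq
  · rfl
  · symm
    have : ψ q = 0 := by
      by_contra hne
      exact hq (h.mem_toFinset.mpr hne)
    simp [this]


lemma conj_intCast (n : ℤ) : (starRingEnd ℂ) ((n : ℂ)) = (n : ℂ) := by
  simp

/-- matrix elements of a commutator extension -/
lemma mel_commExt {A K : Hilb d N →L[ℂ] Hilb d N} {j : Fin d} (hK : IsCommExt A K j)
    (p q : ZLat d × Fin N) :
    mel K p q = ((q.1 j : ℂ) - (p.1 j : ℂ)) * mel A p q := by
  have := hK (dl p) (dl q) (finSupp_dl p) (finSupp_dl q)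
  rw [posOp_dl, posOp_dl, map_smul] at this
  rw [mel, this, inner_smul_right, inner_smul_left, conj_intCast, mel, sub_mul]

lemma inner_sum_sum (M : Hilb d N →L[ℂ] Hilb d N) (Sq Sp : Finset (ZLat d × Fin N))
    (c e : ZLat d × Fin N → ℂ) :
    (inner ℂ (∑ q ∈ Sq, c q • (dl q : Hilb d N)) (M (∑ p ∈ Sp, e p • (dl p : Hilb d N))) : ℂ)
      = ∑ q ∈ Sq, ∑ p ∈ Sp, (starRingEnd ℂ) (c q) * (e p * mel M q p) := by
  rw [map_sum M]
  rw [sum_inner]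
  refine Finset.sum_congr rfl (fun q hq => ?_)
  rw [inner_sum]
  refine Finset.sum_congr rfl (fun p _ => ?_)
  rw [map_smul M, inner_smul_left, inner_smul_right]
  rfl

/-- converse: matrix elements determine being a commutator extension -/
lemma commExt_of_mel {A K : Hilb d N →L[ℂ] Hilb d N} {j : Fin d}
    (h : ∀ p q, mel K p q = ((q.1 j : ℂ) - (p.1 j : ℂ)) * mel A p q) :
    IsCommExt A K j := by
  intro φ ψ hφ hψ
  have hφe := finSupp_sum_eq hφ
  have hψe := finSupp_sum_eq hψ
  have e1 : (inner ℂ φ (K ψ) : ℂ)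
      = ∑ q ∈ hφ.toFinset, ∑ p ∈ hψ.toFinset,
          (starRingEnd ℂ) (φ q) * ((ψ p) * mel K q p) := by
    conv_lhs => rw [hφe, hψe]
    exact inner_sum_sum K _ _ _ _
  have e2 : (inner ℂ φ (A (posOp j ψ)) : ℂ)
      = ∑ q ∈ hφ.toFinset, ∑ p ∈ hψ.toFinset,
          (starRingEnd ℂ) (φ q) * (((p.1 j : ℂ) * ψ p) * mel A q p) := by
    conv_lhs => rw [hφe, posOp_finSupp_sum hψ]
    exact inner_sum_sum A _ _ _ _
  have e3 : (inner ℂ (posOp j φ) (A ψ) : ℂ)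
      = ∑ q ∈ hφ.toFinset, ∑ p ∈ hψ.toFinset,
          (starRingEnd ℂ) ((q.1 j : ℂ) * φ q) * ((ψ p) * mel A q p) := by
    conv_lhs => rw [posOp_finSupp_sum hφ, hψe]
    exact inner_sum_sum A _ _ _ _
  rw [e1, e2, e3, ← Finset.sum_sub_distrib]
  refine Finset.sum_congr rfl (fun q hq => ?_)
  rw [← Finset.sum_sub_distrib]
  refine Finset.sum_congr rfl (fun p hp => ?_)
  rw [h q p, map_mul, conj_intCast]
  ring

lemma single_eq_smul_dl (p : ZLat d × Fin N) (c : ℂ) :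
    lp.single 2 p c = c • (dl p : Hilb d N) := by
  have : c • (1 : ℂ) = c := by simp
  rw [dl, delta, ← lp.single_smul, this]

lemma apply_dl_eq {A B : Hilb d N →L[ℂ] Hilb d N}
    (h : ∀ p q, mel A p q = mel B p q) (q : ZLat d × Fin N) : A (dl q) = B (dl q) := by
  apply lp.ext
  funext r
  rw [← mel_apply, ← mel_apply, h]

lemma clm_ext_of_mel {A B : Hilb d N →L[ℂ] Hilb d N}
    (h : ∀ p q, mel A p q = mel B p q) : A = B := by
  apply ContinuousLinearMap.ext
  intro f
  have hs : HasSum (fun p : ZLat d × Fin N => lp.single 2 p (f p)) f :=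
    lp.hasSum_single ENNReal.ofNat_ne_top f
  have hA : HasSum (fun p : ZLat d × Fin N => A (lp.single 2 p (f p))) (A f) := hs.mapL A
  have hB : HasSum (fun p : ZLat d × Fin N => B (lp.single 2 p (f p))) (B f) := hs.mapL B
  have he : (fun p : ZLat d × Fin N => A (lp.single 2 p (f p)))
      = fun p => B (lp.single 2 p (f p)) := by
    funext p
    rw [single_eq_smul_dl, map_smul, map_smul, apply_dl_eq h]
  rw [he] at hA
  exact hA.unique hB

lemma mel_adjoint (A : Hilb d N →L[ℂ] Hilb d N) (p q : ZLat d × Fin N) :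
    mel (ContinuousLinearMap.adjoint A) p q = (starRingEnd ℂ) (mel A q p) := by
  rw [mel, ContinuousLinearMap.adjoint_inner_right, ← inner_conj_symm]
  rfl

lemma coe_conj_adjoint (A : Hilb d N →L[ℂ] Hilb d N) (p r : ZLat d × Fin N) :
    (starRingEnd ℂ) ((ContinuousLinearMap.adjoint A (dl p) : Hilb d N) r) = mel A p r := by
  rw [← mel_apply, mel_adjoint]
  exact Complex.conj_conj _

lemma summable_mel_mul (A B : Hilb d N →L[ℂ] Hilb d N) (p q : ZLat d × Fin N) :
    Summable (fun r => mel A p r * mel B r q) := by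
  have hs := lp.summable_inner (𝕜 := ℂ) (ContinuousLinearMap.adjoint A (dl p)) (B (dl q))
  apply hs.congr
  intro r
  rw [RCLike.inner_apply, coe_conj_adjoint, ← mel_apply]
  ring

lemma mel_mul (A B : Hilb d N →L[ℂ] Hilb d N) (p q : ZLat d × Fin N) :
    mel (A * B) p q = ∑' r, mel A p r * mel B r q := by
  have h1 : mel (A * B) p q = (inner ℂ (ContinuousLinearMap.adjoint A (dl p)) (B (dl q)) : ℂ) := by
    rw [mel, ContinuousLinearMap.adjoint_inner_left]
    rfl
  rw [h1, lp.inner_eq_tsum]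
  apply tsum_congr
  intro r
  rw [RCLike.inner_apply, coe_conj_adjoint, ← mel_apply]
  ring

/-- periodicity in pair form -/
lemma per_pair {A : Hilb d N →L[ℂ] Hilb d N} (hA : IsPeriodic A) (γ : ZLat d)
    (p q : ZLat d × Fin N) :
    mel A (p.1 + γ, p.2) (q.1 + γ, q.2) = mel A p q := hA γ p.1 q.1 p.2 q.2

lemma per_one : IsPeriodic (1 : Hilb d N →L[ℂ] Hilb d N) := by
  intro γ x y s t
  have h : ∀ (a b : ZLat d) (u v : Fin N),
      (inner ℂ (delta a u) ((1 : Hilb d N →L[ℂ] Hilb d N) (delta b v)) : ℂ)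
        = if ((a, u) : ZLat d × Fin N) = (b, v) then 1 else 0 := by
    intro a b u v
    have h0 : (inner ℂ (delta a u) ((1 : Hilb d N →L[ℂ] Hilb d N) (delta b v)) : ℂ)
        = (dl (b, v) : Hilb d N) (a, u) := inner_dl_left (a, u) (dl (b, v))
    rw [h0, dl_apply]
  rw [h, h]
  congr 1
  simp only [eq_iff_iff, Prod.mk.injEq]
  constructor
  · rintro ⟨h1, h2⟩
    refine ⟨?_, h2⟩
    funext k
    have h3 : x k + γ k = y k + γ k := congrFun h1 k
    exact add_right_cancel h3
  · rintro ⟨h1, h2⟩; exact ⟨by rw [h1], h2⟩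

lemma per_add {A B : Hilb d N →L[ℂ] Hilb d N} (hA : IsPeriodic A) (hB : IsPeriodic B) :
    IsPeriodic (A + B) := by
  intro γ x y s t
  simp only [ContinuousLinearMap.add_apply, inner_add_right]
  rw [hA γ x y s t, hB γ x y s t]

lemma per_neg {A : Hilb d N →L[ℂ] Hilb d N} (hA : IsPeriodic A) : IsPeriodic (-A) := by
  intro γ x y s t
  simp only [ContinuousLinearMap.neg_apply, inner_neg_right]
  rw [hA γ x y s t]

lemma per_sub {A B : Hilb d N →L[ℂ] Hilb d N} (hA : IsPeriodic A) (hB : IsPeriodic B) :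
    IsPeriodic (A - B) := by
  have := per_add hA (per_neg hB)
  simpa [sub_eq_add_neg] using this

lemma per_mul {A B : Hilb d N →L[ℂ] Hilb d N} (hA : IsPeriodic A) (hB : IsPeriodic B) :
    IsPeriodic (A * B) := by
  intro γ x y s t
  have h1 : (inner ℂ (delta (x + γ) s) ((A * B) (delta (y + γ) t)) : ℂ)
      = mel (A * B) (x + γ, s) (y + γ, t) := rfl
  have h2 : (inner ℂ (delta x s) ((A * B) (delta y t)) : ℂ) = mel (A * B) (x, s) (y, t) := rfl
  rw [h1, h2, mel_mul, mel_mul]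
  have e : (ZLat d × Fin N) ≃ (ZLat d × Fin N) :=
    (Equiv.prodCongr (Equiv.addRight γ) (Equiv.refl (Fin N)))
  rw [← Equiv.tsum_eq (Equiv.prodCongr (Equiv.addRight γ) (Equiv.refl (Fin N)))
    (fun r => mel A (x + γ, s) r * mel B r (y + γ, t))]
  apply tsum_congr
  intro r
  have hr : (Equiv.prodCongr (Equiv.addRight γ) (Equiv.refl (Fin N))) r = (r.1 + γ, r.2) := rfl
  rw [hr]
  rw [per_pair hA γ (x, s) r, per_pair hB γ r (y, t)]

lemma per_adjoint {A : Hilb d N →L[ℂ] Hilb d N} (hA : IsPeriodic A) :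
    IsPeriodic (ContinuousLinearMap.adjoint A) := by
  intro γ x y s t
  have h1 : ∀ (a b : ZLat d) (u v : Fin N),
      (inner ℂ (delta a u) ((ContinuousLinearMap.adjoint A) (delta b v)) : ℂ)
        = (starRingEnd ℂ) (mel A (b, v) (a, u)) := fun a b u v => mel_adjoint A (a, u) (b, v)
  rw [h1, h1, per_pair hA γ (y, t) (x, s)]


lemma tau_eq (A : Hilb d N →L[ℂ] Hilb d N) :
    tau A = ∑ s : Fin N, mel A ((0 : ZLat d), s) (0, s) := rfl

lemma tau_add (A B : Hilb d N →L[ℂ] Hilb d N) : tau (A + B) = tau A + tau B := by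
  rw [tau, tau, tau, ← Finset.sum_add_distrib]
  refine Finset.sum_congr rfl (fun s _ => ?_)
  simp [inner_add_right]

lemma tau_neg (A : Hilb d N →L[ℂ] Hilb d N) : tau (-A) = -tau A := by
  rw [tau, tau, ← Finset.sum_neg_distrib]
  refine Finset.sum_congr rfl (fun s _ => ?_)
  simp [inner_neg_right]

lemma tau_sub (A B : Hilb d N →L[ℂ] Hilb d N) : tau (A - B) = tau A - tau B := by
  rw [sub_eq_add_neg, tau_add, tau_neg, sub_eq_add_neg]

/-- the trace per unit volume of any commutator extension vanishes -/
lemma tau_commExt {A K : Hilb d N →L[ℂ] Hilb d N} {j : Fin d} (hK : IsCommExt A K j) :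
    tau K = 0 := by
  rw [tau_eq]
  apply Finset.sum_eq_zero
  intro s _
  rw [mel_commExt hK]
  simp

/-- cyclicity of the trace per unit volume -/
lemma tau_cyclic {A B : Hilb d N →L[ℂ] Hilb d N} (hA : IsPeriodic A) (hB : IsPeriodic B) :
    tau (A * B) = tau (B * A) := by
  classical
  -- F s (y,t) := mel B (0,t) (y,s) * mel A (y,s) (0,t)
  set F : Fin N → (ZLat d × Fin N) → ℂ :=
    fun s p => mel B ((0 : ZLat d), p.2) (p.1, s) * mel A (p.1, s) ((0 : ZLat d), p.2) with hF
  have neg_equiv : ∀ (g : (ZLat d × Fin N) → ℂ),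
      ∑' p, g p = ∑' p : ZLat d × Fin N, g (-p.1, p.2) := by
    intro g
    exact (Equiv.tsum_eq ((Equiv.prodCongr (Equiv.neg (ZLat d)) (Equiv.refl (Fin N)))) g).symm
  -- LHS per s
  have hLs : ∀ s : Fin N, Summable (F s) := by
    intro s
    have h0 : Summable (fun p => mel A ((0 : ZLat d), s) p * mel B p ((0 : ZLat d), s)) :=
      summable_mel_mul A B _ _
    have h1 := (((Equiv.prodCongr (Equiv.neg (ZLat d)) (Equiv.refl (Fin N)))).summable_iff.mpr h0)
    apply h1.congr
    intro p
    have e1 : mel A ((0 : ZLat d), s) (-p.1, p.2) = mel A (p.1, s) ((0:ZLat d), p.2) := by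
      have := per_pair hA (-p.1) (p.1, s) ((0 : ZLat d), p.2)
      simpa using this
    have e2 : mel B (-p.1, p.2) ((0 : ZLat d), s) = mel B ((0:ZLat d), p.2) (p.1, s) := by
      have := per_pair hB (p.1) (-p.1, p.2) ((0 : ZLat d), s)
      simpa using this.symm
    show mel A ((0 : ZLat d), s) (-p.1, p.2) * mel B (-p.1, p.2) ((0 : ZLat d), s) = F s p
    rw [e1, e2, hF, mul_comm]
  have hL : tau (A * B) = ∑ s : Fin N, ∑' p : ZLat d × Fin N, F s p := by
    rw [tau_eq]
    refine Finset.sum_congr rfl (fun s _ => ?_)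
    rw [mel_mul, neg_equiv]
    apply tsum_congr
    intro p
    have e1 : mel A ((0 : ZLat d), s) (-p.1, p.2) = mel A (p.1, s) ((0:ZLat d), p.2) := by
      have := per_pair hA (-p.1) (p.1, s) ((0 : ZLat d), p.2)
      simpa using this
    have e2 : mel B (-p.1, p.2) ((0 : ZLat d), s) = mel B ((0:ZLat d), p.2) (p.1, s) := by
      have := per_pair hB (p.1) (-p.1, p.2) ((0 : ZLat d), s)
      simpa using this.symm
    rw [e1, e2, mul_comm]
  -- RHS per t
  have hR : tau (B * A) = ∑ t : Fin N, ∑' q : ZLat d × Fin N, F q.2 (q.1, t) := by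
    rw [tau_eq]
    refine Finset.sum_congr rfl (fun t _ => ?_)
    rw [mel_mul]
  have hRs : ∀ t : Fin N, Summable (fun q : ZLat d × Fin N => F q.2 (q.1, t)) := by
    intro t
    apply (summable_mel_mul B A ((0 : ZLat d), t) ((0 : ZLat d), t)).congr
    intro q
    rfl
  rw [hL, hR]
  -- interchange: both sides equal the double (finite) sum of ∑'_y
  have key : ∀ (s t : Fin N), Summable (fun y : ZLat d => F s (y, t)) := by
    intro s t
    apply (hLs s).comp_injective (i := fun y : ZLat d => ((y, t) : ZLat d × Fin N))
    intro y y' h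
    exact (Prod.ext_iff.mp h).1
  have hLL : ∀ s, ∑' p : ZLat d × Fin N, F s p = ∑ t : Fin N, ∑' y : ZLat d, F s (y, t) := by
    intro s
    rw [Summable.tsum_prod (hLs s)]
    rw [← Summable.tsum_finsetSum (fun t _ => key s t)]
    apply tsum_congr
    intro y
    exact tsum_fintype _
  have hRR : ∀ t, ∑' q : ZLat d × Fin N, F q.2 (q.1, t)
      = ∑ s : Fin N, ∑' y : ZLat d, F s (y, t) := by
    intro t
    rw [Summable.tsum_prod (hRs t)]
    rw [← Summable.tsum_finsetSum (fun s _ => key s t)]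
    apply tsum_congr
    intro y
    exact tsum_fintype _
  rw [Finset.sum_congr rfl (fun s _ => hLL s), Finset.sum_congr rfl (fun t _ => hRR t)]
  exact Finset.sum_comm

/-- Leibniz rule for commutator extensions -/
lemma commExt_mul {A K B L : Hilb d N →L[ℂ] Hilb d N} {j : Fin d}
    (hK : IsCommExt A K j) (hL : IsCommExt B L j) :
    IsCommExt (A * B) (K * B + A * L) j := by
  apply commExt_of_mel
  intro p q
  have h1 : mel (K * B + A * L) p q = mel (K * B) p q + mel (A * L) p q := by
    rw [mel, mel, mel, ContinuousLinearMap.add_apply, inner_add_right]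
  rw [h1, mel_mul, mel_mul, mel_mul]
  have hs1 : Summable (fun r => mel K p r * mel B r q) := summable_mel_mul K B p q
  have hs2 : Summable (fun r => mel A p r * mel L r q) := summable_mel_mul A L p q
  rw [← Summable.tsum_add hs1 hs2, ← tsum_mul_left]
  apply tsum_congr
  intro r
  rw [mel_commExt hK, mel_commExt hL]
  ring

/-- adjoint rule for commutator extensions -/
lemma commExt_adjoint {A K : Hilb d N →L[ℂ] Hilb d N} {j : Fin d} (hK : IsCommExt A K j) :
    IsCommExt (ContinuousLinearMap.adjoint A) (-(ContinuousLinearMap.adjoint K)) j := by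
  apply commExt_of_mel
  intro p q
  have h1 : mel (-(ContinuousLinearMap.adjoint K)) p q
      = -(starRingEnd ℂ) (mel K q p) := by
    rw [mel, ContinuousLinearMap.neg_apply, inner_neg_right, ← mel, mel_adjoint]
  rw [h1, mel_commExt hK, mel_adjoint, map_mul, map_sub, conj_intCast, conj_intCast]
  ring

/-- uniqueness of commutator extensions -/
lemma commExt_unique {A K K' : Hilb d N →L[ℂ] Hilb d N} {j : Fin d}
    (hK : IsCommExt A K j) (hK' : IsCommExt A K' j) : K = K' := by
  apply clm_ext_of_mel
  intro p q
  rw [mel_commExt hK, mel_commExt hK']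

lemma commExt_one {j : Fin d} : IsCommExt (1 : Hilb d N →L[ℂ] Hilb d N) 0 j := by
  apply commExt_of_mel
  intro p q
  have h0 : mel (0 : Hilb d N →L[ℂ] Hilb d N) p q = 0 := by
    rw [mel, ContinuousLinearMap.zero_apply, inner_zero_right]
  have h1 : mel (1 : Hilb d N →L[ℂ] Hilb d N) p q = if p = q then 1 else 0 := by
    have h2 : mel (1 : Hilb d N →L[ℂ] Hilb d N) p q = (dl q : Hilb d N) p :=
      inner_dl_left p (dl q)
    rw [h2, dl_apply]
  rw [h0, h1]
  split_ifs with h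
  · subst h; simp
  · simp

lemma mel_commExt_left0 {A K : Hilb d N →L[ℂ] Hilb d N} {j : Fin d} (hK : IsCommExt A K j)
    (s : Fin N) (q : ZLat d × Fin N) :
    mel K ((0 : ZLat d), s) q = (q.1 j : ℂ) * mel A ((0 : ZLat d), s) q := by
  rw [mel_commExt hK]
  norm_num

lemma mel_commExt_right0 {A K : Hilb d N →L[ℂ] Hilb d N} {j : Fin d} (hK : IsCommExt A K j)
    (s : Fin N) (q : ZLat d × Fin N) :
    mel K q ((0 : ZLat d), s) = -(q.1 j : ℂ) * mel A q ((0 : ZLat d), s) := by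
  rw [mel_commExt hK]
  norm_num

/-- one side of the six-term identity, reduced to canonical form -/
lemma side_eq {P W V B C C' : Hilb d N →L[ℂ] Hilb d N} {i' j' : Fin d}
    (hB : IsCommExt P B i') (hC : IsCommExt V C j') (hC' : IsCommExt W C' i') :
    tau (P * B * (W * C)) + tau (B * P * (W * C)) + tau (P * P * (C' * C))
      = ∑ s : Fin N, ∑' x, mel P ((0 : ZLat d), s) x *
          ∑' y, mel P x y *
            ∑' z, ((z.1 i' : ℂ) * (-(z.1 j' : ℂ))) * (mel W y z * mel V z ((0 : ZLat d), s)) := by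
  rw [tau_eq, tau_eq, tau_eq, ← Finset.sum_add_distrib, ← Finset.sum_add_distrib]
  refine Finset.sum_congr rfl (fun s _ => ?_)
  set z0 : ZLat d × Fin N := ((0 : ZLat d), s) with hz0
  -- inner ℂ bracket per y
  have brackety : ∀ y : ZLat d × Fin N,
      (y.1 i' : ℂ) * mel (W * C) y z0 + mel (C' * C) y z0
        = ∑' z, ((z.1 i' : ℂ) * (-(z.1 j' : ℂ))) * (mel W y z * mel V z z0) := by
    intro y
    rw [mel_mul, mel_mul, ← tsum_mul_left]
    have hs1 : Summable (fun z => (y.1 i' : ℂ) * (mel W y z * mel C z z0)) :=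
      (summable_mel_mul W C y z0).mul_left _
    have hs2 : Summable (fun z => mel C' y z * mel C z z0) := summable_mel_mul C' C y z0
    rw [← Summable.tsum_add hs1 hs2]
    apply tsum_congr
    intro z
    rw [mel_commExt hC', mel_commExt_right0 hC]
    ring
  -- bracket per x
  have bracketx : ∀ x : ZLat d × Fin N,
      mel (B * (W * C)) x z0 + (x.1 i' : ℂ) * mel (P * (W * C)) x z0
          + mel (P * (C' * C)) x z0
        = ∑' y, mel P x y *
            ∑' z, ((z.1 i' : ℂ) * (-(z.1 j' : ℂ))) * (mel W y z * mel V z z0) := by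
    intro x
    rw [mel_mul, mel_mul, mel_mul, ← tsum_mul_left]
    have hs1 : Summable (fun y => mel B x y * mel (W * C) y z0) :=
      summable_mel_mul B (W * C) x z0
    have hs2 : Summable (fun y => (x.1 i' : ℂ) * (mel P x y * mel (W * C) y z0)) :=
      (summable_mel_mul P (W * C) x z0).mul_left _
    have hs3 : Summable (fun y => mel P x y * mel (C' * C) y z0) :=
      summable_mel_mul P (C' * C) x z0
    rw [← Summable.tsum_add hs1 hs2, ← Summable.tsum_add (hs1.add hs2) hs3]
    apply tsum_congr
    intro y
    rw [← brackety y, mel_commExt hB]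
    ring
  -- outer level
  have e1 : mel (P * B * (W * C)) z0 z0 = ∑' x, mel P z0 x * mel (B * (W * C)) x z0 := by
    rw [mul_assoc, mel_mul]
  have e2 : mel (B * P * (W * C)) z0 z0
      = ∑' x, (x.1 i' : ℂ) * mel P z0 x * mel (P * (W * C)) x z0 := by
    rw [mul_assoc, mel_mul]
    apply tsum_congr
    intro x
    rw [mel_commExt_left0 hB]
  have e3 : mel (P * P * (C' * C)) z0 z0 = ∑' x, mel P z0 x * mel (P * (C' * C)) x z0 := by
    rw [mul_assoc, mel_mul]
  rw [e1, e2, e3]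
  have hs1 : Summable (fun x => mel P z0 x * mel (B * (W * C)) x z0) :=
    summable_mel_mul P (B * (W * C)) z0 z0
  have hs2 : Summable (fun x => (x.1 i' : ℂ) * mel P z0 x * mel (P * (W * C)) x z0) := by
    apply (summable_mel_mul B (P * (W * C)) z0 z0).congr
    intro x
    rw [mel_commExt_left0 hB]
  have hs3 : Summable (fun x => mel P z0 x * mel (P * (C' * C)) x z0) :=
    summable_mel_mul P (P * (C' * C)) z0 z0
  rw [← Summable.tsum_add hs1 hs2, ← Summable.tsum_add (hs1.add hs2) hs3]
  apply tsum_congr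
  intro x
  rw [← bracketx x]
  ring

/-- the six-term kernel identity -/
lemma six_term {P W V Bi' Bj' Ci Cj DiW DjW : Hilb d N →L[ℂ] Hilb d N} {i j : Fin d}
    (hBi : IsCommExt P Bi' i) (hBj : IsCommExt P Bj' j)
    (hCi : IsCommExt V Ci i) (hCj : IsCommExt V Cj j)
    (hDiW : IsCommExt W DiW i) (hDjW : IsCommExt W DjW j) :
    tau (P * Bi' * (W * Cj)) + tau (Bi' * P * (W * Cj)) + tau (P * P * (DiW * Cj))
      = tau (P * Bj' * (W * Ci)) + tau (Bj' * P * (W * Ci)) + tau (P * P * (DjW * Ci)) := by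
  rw [side_eq hBi hCj hDiW, side_eq hBj hCi hDjW]
  refine Finset.sum_congr rfl (fun s _ => ?_)
  apply tsum_congr; intro x
  congr 1
  apply tsum_congr; intro y
  congr 1
  apply tsum_congr; intro z
  ring

lemma tau_zero : tau (0 : Hilb d N →L[ℂ] Hilb d N) = 0 := by
  rw [tau]
  apply Finset.sum_eq_zero
  intro s _
  simp

lemma pbp_zero {P B : Hilb d N →L[ℂ] Hilb d N} {j : Fin d}
    (hP : P * P = P) (hB : IsCommExt P B j) : P * B * P = 0 := by
  have h2 : IsCommExt (P * P) (B * P + P * B) j := commExt_mul hB hB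
  rw [hP] at h2
  have hBe : B = B * P + P * B := commExt_unique hB h2
  have h3 : P * B * P + P * B * P = P * B * P := by
    conv_rhs => rw [hBe]
    have : P * (B * P + P * B) * P = P * B * (P * P) + (P * P) * (B * P) := by noncomm_ring
    rw [this, hP]
    noncomm_ring
  have h4 := h3
  nth_rewrite 3 [← zero_add (P * B * P)] at h4
  exact add_right_cancel h4

set_option maxHeartbeats 2000000 in
/-- Chern–Simons formula / invariance of the Chern marker under unitary
conjugation.  Let `P` be a periodic orthogonal projection and `U` a periodic unitary on
`ℓ²(ℤ^d, ℂ^N)` such that `[P, X_i]`, `[P, X_j]` admit bounded periodic extensions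
`B_i`, `B_j` and `[U, X_i]`, `[U, X_j]` admit bounded periodic extensions.  Then
`P_U := U P U*` has bounded periodic extensions `B'_i`, `B'_j` of its commutators with
`X_i`, `X_j`, and `τ(P_U [B'_i, B'_j] P_U) = τ(P [B_i, B_j] P)`. -/
theorem stmt_6 {d N : ℕ} (hd : 0 < d) (hN : 0 < N)
    (P : Hilb d N →L[ℂ] Hilb d N) (hPper : IsPeriodic P)
    (hPsa : IsSelfAdjoint P) (hPidem : P * P = P)
    (U : Hilb d N →L[ℂ] Hilb d N) (hUper : IsPeriodic U)
    (hU₁ : ContinuousLinearMap.adjoint U * U = 1) (hU₂ : U * ContinuousLinearMap.adjoint U = 1)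
    (i j : Fin d)
    (Bi : Hilb d N →L[ℂ] Hilb d N) (hBiper : IsPeriodic Bi) (hBi : IsCommExt P Bi i)
    (Bj : Hilb d N →L[ℂ] Hilb d N) (hBjper : IsPeriodic Bj) (hBj : IsCommExt P Bj j)
    (hUi : ∃ Ci, IsPeriodic Ci ∧ IsCommExt U Ci i)
    (hUj : ∃ Cj, IsPeriodic Cj ∧ IsCommExt U Cj j) :
    ∃ Bi' Bj' : Hilb d N →L[ℂ] Hilb d N,
      IsPeriodic Bi' ∧ IsCommExt (U * P * ContinuousLinearMap.adjoint U) Bi' i ∧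
      IsPeriodic Bj' ∧ IsCommExt (U * P * ContinuousLinearMap.adjoint U) Bj' j ∧
      tau ((U * P * ContinuousLinearMap.adjoint U) * (Bi' * Bj' - Bj' * Bi') *
            (U * P * ContinuousLinearMap.adjoint U)) =
        tau (P * (Bi * Bj - Bj * Bi) * P) := by
  classical
  obtain ⟨Ci, hCiper, hCi⟩ := hUi
  obtain ⟨Cj, hCjper, hCj⟩ := hUj
  set W : Hilb d N →L[ℂ] Hilb d N := ContinuousLinearMap.adjoint U with hWdef
  set DiW : Hilb d N →L[ℂ] Hilb d N := -(ContinuousLinearMap.adjoint Ci) with hDiWdef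
  set DjW : Hilb d N →L[ℂ] Hilb d N := -(ContinuousLinearMap.adjoint Cj) with hDjWdef
  have hWi : IsCommExt W DiW i := commExt_adjoint hCi
  have hWj : IsCommExt W DjW j := commExt_adjoint hCj
  have hWper : IsPeriodic W := per_adjoint hUper
  have hDiWper : IsPeriodic DiW := per_neg (per_adjoint hCiper)
  have hDjWper : IsPeriodic DjW := per_neg (per_adjoint hCjper)
  have hUW : ∀ X : Hilb d N →L[ℂ] Hilb d N, U * (W * X) = X := fun X => by
    rw [← mul_assoc, hU₂, one_mul]
  have hWU : ∀ X : Hilb d N →L[ℂ] Hilb d N, W * (U * X) = X := fun X => by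
    rw [← mul_assoc, hU₁, one_mul]
  have hzi : DiW * U + W * Ci = 0 := by
    have h := commExt_mul hWi hCi
    rw [hU₁] at h
    exact commExt_unique h commExt_one
  have hzj : DjW * U + W * Cj = 0 := by
    have h := commExt_mul hWj hCj
    rw [hU₁] at h
    exact commExt_unique h commExt_one
  have hWCi : W * Ci = -(DiW * U) := eq_neg_of_add_eq_zero_right hzi
  have hWCj : W * Cj = -(DjW * U) := eq_neg_of_add_eq_zero_right hzj
  refine ⟨(Ci * P + U * Bi) * W + (U * P) * DiW, (Cj * P + U * Bj) * W + (U * P) * DjW,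
    per_add (per_mul (per_add (per_mul hCiper hPper) (per_mul hUper hBiper)) hWper)
      (per_mul (per_mul hUper hPper) hDiWper),
    commExt_mul (commExt_mul hCi hBi) hWi,
    per_add (per_mul (per_add (per_mul hCjper hPper) (per_mul hUper hBjper)) hWper)
      (per_mul (per_mul hUper hPper) hDjWper),
    commExt_mul (commExt_mul hCj hBj) hWj, ?_⟩
  -- the trace identity
  set Gi : Hilb d N →L[ℂ] Hilb d N := (W * Ci) * P + Bi - P * (W * Ci) with hGi
  set Gj : Hilb d N →L[ℂ] Hilb d N := (W * Cj) * P + Bj - P * (W * Cj) with hGj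
  have pai : IsPeriodic (W * Ci) := per_mul hWper hCiper
  have paj : IsPeriodic (W * Cj) := per_mul hWper hCjper
  have hGiper : IsPeriodic Gi :=
    per_sub (per_add (per_mul pai hPper) hBiper) (per_mul hPper pai)
  have hGjper : IsPeriodic Gj :=
    per_sub (per_add (per_mul paj hPper) hBjper) (per_mul hPper paj)
  have hDiWeq : DiW = -(W * Ci * W) := by
    have h1 : DiW * U = -(W * Ci) := by rw [hWCi, neg_neg]
    calc DiW = DiW * (U * W) := by rw [hU₂, mul_one]
    _ = DiW * U * W := by rw [mul_assoc]
    _ = -(W * Ci) * W := by rw [h1]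
    _ = -(W * Ci * W) := by rw [neg_mul]
  have hDjWeq : DjW = -(W * Cj * W) := by
    have h1 : DjW * U = -(W * Cj) := by rw [hWCj, neg_neg]
    calc DjW = DjW * (U * W) := by rw [hU₂, mul_one]
    _ = DjW * U * W := by rw [mul_assoc]
    _ = -(W * Cj) * W := by rw [h1]
    _ = -(W * Cj * W) := by rw [neg_mul]
  have hfacti : (Ci * P + U * Bi) * W + (U * P) * DiW = U * Gi * W := by
    rw [hDiWeq, hGi]
    have h2 : U * (W * (Ci * (P * W))) = Ci * (P * W) := hUW _
    simp only [mul_add, add_mul, sub_mul, mul_sub, mul_neg, neg_mul, mul_assoc, h2]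
    abel
  have hfactj : (Cj * P + U * Bj) * W + (U * P) * DjW = U * Gj * W := by
    rw [hDjWeq, hGj]
    have h2 : U * (W * (Cj * (P * W))) = Cj * (P * W) := hUW _
    simp only [mul_add, add_mul, sub_mul, mul_sub, mul_neg, neg_mul, mul_assoc, h2]
    abel
  rw [hfacti, hfactj]
  have hcol : ∀ X Y : Hilb d N →L[ℂ] Hilb d N,
      (U * X * W) * (U * Y * W) = U * (X * Y) * W := by
    intro X Y
    calc (U * X * W) * (U * Y * W) = U * (X * (W * (U * (Y * W)))) := by
          simp only [mul_assoc]
    _ = U * (X * (Y * W)) := by rw [hWU]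
    _ = U * (X * Y) * W := by simp only [mul_assoc]
  have hQ : U * P * W * ((U * Gi * W) * (U * Gj * W) - (U * Gj * W) * (U * Gi * W)) *
        (U * P * W) = U * (P * (Gi * Gj - Gj * Gi) * P) * W := by
    rw [hcol, hcol]
    have h1 : U * (Gi * Gj) * W - U * (Gj * Gi) * W = U * (Gi * Gj - Gj * Gi) * W := by
      rw [← sub_mul, ← mul_sub]
    rw [h1, hcol, hcol]
  rw [hQ]
  have hDper : IsPeriodic (Gi * Gj - Gj * Gi) :=
    per_sub (per_mul hGiper hGjper) (per_mul hGjper hGiper)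
  have hD'per : IsPeriodic (Bi * Bj - Bj * Bi) :=
    per_sub (per_mul hBiper hBjper) (per_mul hBjper hBiper)
  have htconj : ∀ M : Hilb d N →L[ℂ] Hilb d N, IsPeriodic M → tau (U * M * W) = tau M := by
    intro M hM
    rw [mul_assoc, tau_cyclic hUper (per_mul hM hWper), mul_assoc, hU₁, mul_one]
  rw [htconj _ (per_mul (per_mul hPper hDper) hPper)]
  have hPDP : ∀ D : Hilb d N →L[ℂ] Hilb d N, IsPeriodic D →
      tau (P * D * P) = tau (P * D) := by
    intro D hD
    rw [tau_cyclic (per_mul hPper hD) hPper, ← mul_assoc, hPidem]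
  rw [hPDP _ hDper, hPDP _ hD'per]
  rw [mul_sub P, tau_sub, mul_sub P, tau_sub]
  -- core identity
  have hsix := six_term hBi hBj hCi hCj hWi hWj
  -- helper (a)
  have hA : ∀ B a : Hilb d N →L[ℂ] Hilb d N, IsPeriodic B → IsPeriodic a →
      P * B * P = 0 → tau (P * (B * (a * P - P * a))) = tau (P * B * a) := by
    intro B a hBper' haper hPBP
    have h1 : P * (B * (a * P - P * a)) = (P * B * a) * P - (P * B * P) * a := by noncomm_ring
    rw [h1, hPBP, zero_mul, tau_sub, tau_zero, sub_zero]
    rw [tau_cyclic (per_mul (per_mul hPper hBper') haper) hPper]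
    have h2 : P * (P * B * a) = (P * P) * B * a := by noncomm_ring
    rw [h2, hPidem]
  -- helper (b)
  have hB : ∀ B a : Hilb d N →L[ℂ] Hilb d N, IsPeriodic B → IsPeriodic a →
      P * B * P = 0 → tau (P * ((a * P - P * a) * B)) = -tau (B * P * a) := by
    intro B a hBper' haper hPBP
    have h1 : P * ((a * P - P * a) * B) = (P * a) * (P * B) - (P * P) * (a * B) := by
      noncomm_ring
    rw [h1, hPidem, tau_sub]
    rw [tau_cyclic (per_mul hPper haper) (per_mul hPper hBper')]
    have h2 : (P * B) * (P * a) = (P * B * P) * a := by noncomm_ring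
    rw [h2, hPBP, zero_mul, tau_zero, zero_sub]
    rw [← mul_assoc, tau_cyclic (per_mul hPper haper) hBper']
    rw [← mul_assoc]
  -- helper (c)
  have hC : ∀ a b : Hilb d N →L[ℂ] Hilb d N, IsPeriodic a → IsPeriodic b →
      tau (P * ((a * P - P * a) * (b * P - P * b)))
        = tau ((P * a) * (P * b)) - tau (P * (a * b)) := by
    intro a b hap hbp
    have h1 : P * ((a * P - P * a) * (b * P - P * b))
        = ((P * a) * (P * b)) * P - (P * a) * (P * P) * b - (P * P) * ((a * b) * P)
          + (P * P) * (a * (P * b)) := by noncomm_ring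
    rw [h1, hPidem]
    rw [tau_add, tau_sub, tau_sub]
    have e1 : tau ((P * a) * (P * b) * P) = tau ((P * a) * (P * b)) := by
      rw [tau_cyclic (per_mul (per_mul hPper hap) (per_mul hPper hbp)) hPper]
      have h2 : P * ((P * a) * (P * b)) = ((P * P) * a) * (P * b) := by noncomm_ring
      rw [h2, hPidem]
    have e2 : tau ((P * a) * P * b) = tau ((P * a) * (P * b)) := by rw [mul_assoc]
    have e3 : tau (P * ((a * b) * P)) = tau (P * (a * b)) := by
      rw [← mul_assoc, tau_cyclic (per_mul hPper (per_mul hap hbp)) hPper,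
        ← mul_assoc, hPidem]
    have e4 : tau (P * (a * (P * b))) = tau ((P * a) * (P * b)) := by
      have h2 : P * (a * (P * b)) = (P * a) * (P * b) := by noncomm_ring
      rw [h2]
    rw [e1, e2, e3, e4]
    ring
  -- expansions
  have hexp1 : P * (Gi * Gj) = P * (Bi * Bj)
      + (P * (Bi * ((W * Cj) * P - P * (W * Cj)))
        + P * (((W * Ci) * P - P * (W * Ci)) * Bj)
        + P * (((W * Ci) * P - P * (W * Ci)) * ((W * Cj) * P - P * (W * Cj)))) := by
    rw [hGi, hGj]; noncomm_ring
  have hexp2 : P * (Gj * Gi) = P * (Bj * Bi)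
      + (P * (Bj * ((W * Ci) * P - P * (W * Ci)))
        + P * (((W * Cj) * P - P * (W * Cj)) * Bi)
        + P * (((W * Cj) * P - P * (W * Cj)) * ((W * Ci) * P - P * (W * Ci)))) := by
    rw [hGi, hGj]; noncomm_ring
  rw [hexp1, hexp2, tau_add, tau_add, tau_add, tau_add, tau_add, tau_add]
  rw [hA Bi (W * Cj) hBiper paj (pbp_zero hPidem hBi),
      hA Bj (W * Ci) hBjper pai (pbp_zero hPidem hBj),
      hB Bj (W * Ci) hBjper pai (pbp_zero hPidem hBj),
      hB Bi (W * Cj) hBiper paj (pbp_zero hPidem hBi),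
      hC (W * Ci) (W * Cj) pai paj,
      hC (W * Cj) (W * Ci) paj pai]
  -- symmetric quadratic term
  have hScomm : tau ((P * (W * Ci)) * (P * (W * Cj)))
      = tau ((P * (W * Cj)) * (P * (W * Ci))) :=
    tau_cyclic (per_mul hPper pai) (per_mul hPper paj)
  -- convert the a*b terms
  have hab : tau (P * ((W * Ci) * (W * Cj))) = -tau (P * P * (DiW * Cj)) := by
    have h1 : P * ((W * Ci) * (W * Cj)) = -(P * DiW * (U * (W * Cj))) := by
      rw [hWCi]; noncomm_ring
    rw [h1, hUW, tau_neg]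
    congr 1
    have h2 : P * P * (DiW * Cj) = (P * P) * DiW * Cj := by noncomm_ring
    rw [h2, hPidem]
  have hba : tau (P * ((W * Cj) * (W * Ci))) = -tau (P * P * (DjW * Ci)) := by
    have h1 : P * ((W * Cj) * (W * Ci)) = -(P * DjW * (U * (W * Ci))) := by
      rw [hWCj]; noncomm_ring
    rw [h1, hUW, tau_neg]
    congr 1
    have h2 : P * P * (DjW * Ci) = (P * P) * DjW * Ci := by noncomm_ring
    rw [h2, hPidem]
  rw [hScomm, hab, hba]
  linear_combination hsix
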